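/- Let p be a prime, n ≥ 1, r ≥ 0, and x = (x_0,…,x_{n−1}) ∈ 𝔽_p^n. Then argmax^{(r)}(x) = Σ_{i=0}^{n−1} i^{(r)} · Σ_{t=0}^{p−1} ( δ_t(x_i) · Π_{0 ≤ j < i} L_t(x_j) · Π_{i < k ≤ n−1} L_{t+1}(x_k) ) in 𝔽_p, where δ_t(z) = 1 − (z − t)^{p−1}, L_t(z) = Σ_{k=0}^{t−1} ( 1 − (z − k)^{p−1} ), and i^{(r)} ∈ {0,…,p−1} ⊆ 𝔽_p is the r-th digit of the base-p expansion of the integer i. -/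

import Mathlib

/-- The maximum of the components of `x`, where elements of `ZMod p` are
compared via their canonical natural-number representatives. -/
def fmax {p n : ℕ} (x : Fin n → ZMod p) : ZMod p :=
  ((Finset.univ.sup fun i => (x i).val : ℕ) : ZMod p)

/-- The least index `i` with `x i = fmax x`, as a natural number. -/
noncomputable def argmaxN {p n : ℕ} (x : Fin n → ZMod p) : ℕ :=
  sInf {i : ℕ | ∃ h : i < n, x ⟨i, h⟩ = fmax x}

/-- The `r`-th digit of the base-`p` expansion of `k`, as an element of `ZMod p`. -/
def digitP (p k r : ℕ) : ZMod p := (((k / p ^ r) % p : ℕ) : ZMod p)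

/-- Polynomial expression of the low-pass function `χ(z < t)`. -/
def Lp (p t : ℕ) (z : ZMod p) : ZMod p :=
  ∑ k ∈ Finset.range t, (1 - (z - (k : ZMod p)) ^ (p - 1))

/-- Polynomial expression of the Kronecker delta `χ(z = t)`. -/
def deltaP (p t : ℕ) (z : ZMod p) : ZMod p := 1 - (z - (t : ZMod p)) ^ (p - 1)

lemma deltaP_eq (p : ℕ) [Fact p.Prime] (t : ℕ) (ht : t < p) (z : ZMod p) :
    deltaP p t z = if z.val = t then 1 else 0 := by
  have hp := (Fact.out : p.Prime)
  unfold deltaP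
  by_cases h : z = (t : ZMod p)
  · rw [if_pos (by rw [h, ZMod.val_cast_of_lt ht])]
    simp [h, zero_pow (Nat.sub_ne_zero_of_lt hp.one_lt)]
  · rw [if_neg (by intro hv; exact h (by rw [← hv, ZMod.natCast_rightInverse z]))]
    rw [ZMod.pow_card_sub_one_eq_one (sub_ne_zero.mpr h), sub_self]

lemma Lp_eq (p : ℕ) [Fact p.Prime] (t : ℕ) (ht : t ≤ p) (z : ZMod p) :
    Lp p t z = if z.val < t then 1 else 0 := by
  unfold Lp
  rw [Finset.sum_congr rfl (fun k hk => by
    have := deltaP_eq p k (lt_of_lt_of_le (Finset.mem_range.mp hk) ht) z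
    simpa [deltaP] using this)]
  simp [Finset.sum_ite_eq, Finset.mem_range]

theorem argmax_digit_formula (p : ℕ) (hp : p.Prime) (n : ℕ) (hn : 1 ≤ n) (r : ℕ)
    (x : Fin n → ZMod p) :
    digitP p (argmaxN x) r =
      ∑ i : Fin n, digitP p (i : ℕ) r *
        ∑ t ∈ Finset.range p,
          (deltaP p t (x i) *
            (∏ j ∈ Finset.univ.filter fun j => j < i, Lp p t (x j)) *
            ∏ k ∈ Finset.univ.filter fun k => i < k, Lp p (t + 1) (x k)) := by
  haveI : Fact p.Prime := ⟨hp⟩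
  haveI : NeZero n := ⟨by omega⟩
  set M : ℕ := Finset.univ.sup (fun i => (x i).val) with hM
  have hvle : ∀ i, (x i).val ≤ M := fun i => Finset.le_sup (f := fun i => (x i).val) (Finset.mem_univ i)
  have hMlt : M < p := by
    rw [hM]
    exact Finset.sup_lt_iff (by exact_mod_cast hp.pos) |>.mpr
      (fun i _ => ZMod.val_lt (x i))
  obtain ⟨i0, -, hi0⟩ := Finset.exists_mem_eq_sup Finset.univ
    (Finset.univ_nonempty) (fun i => (x i).val)
  set S : Finset (Fin n) := Finset.univ.filter (fun i => (x i).val = M) with hSdef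
  have hSne : S.Nonempty := ⟨i0, by simp [hSdef, hi0.symm, hM]⟩
  set A : Fin n := S.min' hSne with hAdef
  have hAmem : A ∈ S := S.min'_mem hSne
  have hAval : (x A).val = M := (Finset.mem_filter.mp hAmem).2
  have hAmin : ∀ j ∈ S, A ≤ j := fun j hj => S.min'_le j hj
  have hfmax : fmax x = (M : ZMod p) := rfl
  have hxA : x A = (M : ZMod p) := by
    rw [← hAval]; exact (ZMod.natCast_rightInverse (x A)).symm
  have hargmax : argmaxN x = (A : ℕ) := by
    unfold argmaxN
    have hmemA : (A : ℕ) ∈ {i : ℕ | ∃ h : i < n, x ⟨i, h⟩ = fmax x} := by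
      refine Set.mem_setOf_eq ▸ ⟨A.isLt, ?_⟩
      rw [hfmax, Fin.eta, hxA]
    apply le_antisymm (Nat.sInf_le hmemA)
    apply le_csInf ⟨(A : ℕ), hmemA⟩
    rintro b ⟨hb, hxb⟩
    have : (⟨b, hb⟩ : Fin n) ∈ S := by
      simp only [hSdef, Finset.mem_filter, Finset.mem_univ, true_and]
      rw [hxb, hfmax, ZMod.val_cast_of_lt hMlt]
    exact hAmin ⟨b, hb⟩ this
  have hinner : ∀ i : Fin n,
      (∑ t ∈ Finset.range p,
        (deltaP p t (x i) *
          (∏ j ∈ Finset.univ.filter fun j => j < i, Lp p t (x j)) *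
          ∏ k ∈ Finset.univ.filter fun k => i < k, Lp p (t + 1) (x k)))
      = if i = A then 1 else 0 := by
    intro i
    by_cases hiA : i = A
    · subst hiA
      rw [if_pos rfl]
      have hterm : ∀ t ∈ Finset.range p,
          (deltaP p t (x A) *
            (∏ j ∈ Finset.univ.filter fun j => j < A, Lp p t (x j)) *
            ∏ k ∈ Finset.univ.filter fun k => A < k, Lp p (t + 1) (x k))
          = if M = t then 1 else 0 := by
        intro t htp
        rw [Finset.mem_range] at htp
        rw [deltaP_eq p t htp]
        by_cases hMt : M = t
        · rw [if_pos (by omega), if_pos hMt]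
          have h1 : (∏ j ∈ Finset.univ.filter fun j => j < A, Lp p t (x j)) = 1 := by
            apply Finset.prod_eq_one
            intro j hj
            rw [Finset.mem_filter] at hj
            have hjS : j ∉ S := fun hjS => absurd (hAmin j hjS) (not_le.mpr hj.2)
            have hne : (x j).val ≠ M := fun h => hjS (by simp [hSdef, h])
            have : (x j).val < t := by have := hvle j; omega
            rw [Lp_eq p t htp.le, if_pos this]
          have h2 : (∏ k ∈ Finset.univ.filter fun k => A < k, Lp p (t + 1) (x k)) = 1 := by
            apply Finset.prod_eq_one
            intro k _
            have : (x k).val < t + 1 := by have := hvle k; omega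
            rw [Lp_eq p (t + 1) (by omega), if_pos this]
          rw [h1, h2]; ring
        · rw [if_neg (by omega), if_neg hMt]; ring
      rw [Finset.sum_congr rfl hterm]
      simp [Finset.sum_ite_eq, Finset.mem_range, hMlt]
    · rw [if_neg hiA]
      apply Finset.sum_eq_zero
      intro t htp
      rw [Finset.mem_range] at htp
      rw [deltaP_eq p t htp]
      by_cases hvt : (x i).val = t
      · rcases lt_or_gt_of_ne hiA with hlt | hgt
        · have hviM : (x i).val < M := by
            have hne : (x i).val ≠ M := fun h =>
              absurd (hAmin i (by simp [hSdef, h])) (not_le.mpr hlt)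
            have := hvle i; omega
          have hz : (∏ k ∈ Finset.univ.filter fun k => i < k, Lp p (t + 1) (x k)) = 0 := by
            apply Finset.prod_eq_zero (Finset.mem_filter.mpr ⟨Finset.mem_univ A, hlt⟩)
            rw [Lp_eq p (t + 1) (by omega), if_neg (by omega)]
          rw [hz]; ring
        · have hz : (∏ j ∈ Finset.univ.filter fun j => j < i, Lp p t (x j)) = 0 := by
            apply Finset.prod_eq_zero (Finset.mem_filter.mpr ⟨Finset.mem_univ A, hgt⟩)
            have : ¬ (x A).val < t := by have := hvle i; omega
            rw [Lp_eq p t htp.le, if_neg this]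
          rw [hz]; ring
      · rw [if_neg hvt]; ring
  rw [Finset.sum_congr rfl (fun i _ => by rw [hinner i])]
  simp only [mul_ite, mul_one, mul_zero]
  rw [Finset.sum_ite_eq' Finset.univ A (fun i => digitP p (i : ℕ) r), if_pos (Finset.mem_univ A),
    hargmax]
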